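/- For every natural number n ≥ 1 and every quaternion q, the conjugate Fueter operator applied to the function q ↦ q^n satisfies D̄(q^n) = 2( n q^{n-1} + ∑_{k=1}^{n} q^{n-k} q̄^{k-1} ). -/

import Mathlib

open scoped Quaternion

def e1 : ℍ[ℝ] := ⟨0,1,0,0⟩
def e2 : ℍ[ℝ] := ⟨0,0,1,0⟩
def e3 : ℍ[ℝ] := ⟨0,0,0,1⟩

/-- The conjugate Fueter operator `D̄ = ∂_{q0} - e1 ∂_{q1} - e2 ∂_{q2} - e3 ∂_{q3}`. -/
noncomputable def fueterDbar (f : ℍ[ℝ] → ℍ[ℝ]) (q : ℍ[ℝ]) : ℍ[ℝ] :=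
  fderiv ℝ f q 1 - e1 * fderiv ℝ f q e1 - e2 * fderiv ℝ f q e2 - e3 * fderiv ℝ f q e3

lemma key (a b : ℍ[ℝ]) :
    a * 1 * b - e1 * (a * e1 * b) - e2 * (a * e2 * b) - e3 * (a * e3 * b)
      = 2 * (a + star a) * b := by
  rw [show (2:ℍ[ℝ]) * (a + star a) * b = (a + star a) * b + (a + star a) * b by
    rw [two_mul, add_mul]]
  ext <;> simp [Quaternion.re_mul, Quaternion.imI_mul, Quaternion.imJ_mul,
    Quaternion.imK_mul] <;> simp [e1, e2, e3] <;> ring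

/-- The Fréchet derivative of `x ↦ x ^ n` at `q`, as a continuous linear map. -/
noncomputable def L (n : ℕ) (q : ℍ[ℝ]) : ℍ[ℝ] →L[ℝ] ℍ[ℝ] :=
  ∑ i ∈ Finset.range n, ContinuousLinearMap.mulLeftRight ℝ ℍ[ℝ] (q ^ i) (q ^ (n - 1 - i))

lemma hL (n : ℕ) (q : ℍ[ℝ]) : HasFDerivAt (fun x : ℍ[ℝ] => x ^ n) (L n q) q := by
  induction n with
  | zero => simpa [L] using (hasFDerivAt_const (1 : ℍ[ℝ]) q)
  | succ n ih =>
    have h := ih.mul' (hasFDerivAt_id q)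
    simp only [id_eq] at h
    have he : q ^ n • ContinuousLinearMap.id ℝ ℍ[ℝ] + MulOpposite.op q • L n q = L (n + 1) q := by
      refine ContinuousLinearMap.ext fun v => ?_
      simp only [L, ContinuousLinearMap.add_apply, ContinuousLinearMap.smul_apply,
        ContinuousLinearMap.id_apply, ContinuousLinearMap.smulRight_apply,
        ContinuousLinearMap.sum_apply, ContinuousLinearMap.mulLeftRight_apply,
        Finset.sum_range_succ, smul_eq_mul, op_smul_eq_mul, Finset.sum_mul]
      have : ∀ i ∈ Finset.range n, q ^ i * v * q ^ (n - 1 - i) * q = q ^ i * v * q ^ (n - i) := by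
        intro i hi
        rw [Finset.mem_range] at hi
        rw [mul_assoc, ← pow_succ]
        congr 2
        omega
      rw [Finset.sum_congr rfl this]
      simp [Nat.sub_self, Nat.add_sub_cancel]
      exact add_comm _ _
    rw [he] at h
    exact h.congr_fderiv rfl |>.congr_of_eventuallyEq (by filter_upwards with x; rw [pow_succ]; rfl)

/-- For `n ≥ 1` and every quaternion `q`,
`D̄(q^n) = 2 (n q^{n-1} + ∑_{k=1}^{n} q^{n-k} q̄^{k-1})`. -/
theorem fueterDbar_pow (n : ℕ) (hn : 1 ≤ n) (q : ℍ[ℝ]) :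
    fueterDbar (fun x => x ^ n) q =
      2 * ((n : ℍ[ℝ]) * q ^ (n - 1) +
        ∑ k ∈ Finset.range n, q ^ (n - 1 - k) * (star q) ^ k) := by
  have hf : fderiv ℝ (fun x : ℍ[ℝ] => x ^ n) q = L n q := (hL n q).fderiv
  rw [fueterDbar, hf]
  simp only [L, ContinuousLinearMap.sum_apply, ContinuousLinearMap.mulLeftRight_apply,
    Finset.mul_sum]
  rw [← Finset.sum_sub_distrib, ← Finset.sum_sub_distrib, ← Finset.sum_sub_distrib]
  have hkey : ∀ i ∈ Finset.range n,
      q ^ i * 1 * q ^ (n - 1 - i) - e1 * (q ^ i * e1 * q ^ (n - 1 - i))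
        - e2 * (q ^ i * e2 * q ^ (n - 1 - i)) - e3 * (q ^ i * e3 * q ^ (n - 1 - i))
      = 2 * (q ^ (n - 1) + (star q) ^ i * q ^ (n - 1 - i)) := by
    intro i hi
    rw [Finset.mem_range] at hi
    rw [key, mul_assoc, add_mul, ← pow_add, ← star_pow]
    congr 3
    omega
  rw [Finset.sum_congr rfl hkey]
  have hc : Commute q (star q) := by
    unfold Commute SemiconjBy
    exact (star_comm_self' q).symm
  have hsum : ∀ k ∈ Finset.range n,
      (star q) ^ k * q ^ (n - 1 - k) = q ^ (n - 1 - k) * (star q) ^ k := fun k _ =>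
    ((hc.pow_pow (n - 1 - k) k).eq).symm
  rw [Finset.sum_congr rfl (fun i hi => by rw [hsum i hi])]
  rw [← Finset.mul_sum, Finset.sum_add_distrib, Finset.sum_const, Finset.card_range,
    nsmul_eq_mul]
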